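/- Let 0 ≤ s ≤ n-1. The number of prime parking functions π of length n with π_1 < π_2 < ... < π_s equals C(n-1, s) · (n-1)^(n-s-1). -/

import Mathlib

/-- A parking function of length `n`. -/
def IsParkingFunction (n : ℕ) (π : Fin n → ℕ) : Prop :=
  (∀ i, 1 ≤ π i) ∧ ∃ σ : Equiv.Perm (Fin n),
    Monotone (π ∘ σ) ∧ ∀ i : Fin n, π (σ i) ≤ (i : ℕ) + 1

/-- A prime parking function of length `n`. -/
def IsPrimeParkingFunction (n : ℕ) (π : Fin n → ℕ) : Prop :=
  IsParkingFunction n π ∧ ∀ j : ℕ, 1 ≤ j → j ≤ n - 1 →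
    j + 1 ≤ (Finset.univ.filter (fun i : Fin n => π i ≤ j)).card

open Finset

set_option linter.unusedSectionVars false

namespace PPF



variable {m : ℕ}

/-- standard representative in `{1,...,m}` of a residue mod `m`. -/
def rep (m : ℕ) (r : ZMod m) : ℕ := if r.val = 0 then m else r.val

lemma one_le_rep [NeZero m] (r : ZMod m) : 1 ≤ rep m r := by
  unfold rep; split_ifs
  · exact Nat.one_le_iff_ne_zero.2 (NeZero.ne m)
  · omega

lemma rep_le [NeZero m] (r : ZMod m) : rep m r ≤ m := by
  unfold rep; split_ifs
  · exact le_refl m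
  · exact le_of_lt (ZMod.val_lt r)

lemma natCast_rep [NeZero m] (r : ZMod m) : ((rep m r : ℕ) : ZMod m) = r := by
  have hv : ((r.val : ℕ) : ZMod m) = r := by rw [ZMod.natCast_val, ZMod.cast_id]
  unfold rep; split_ifs with h
  · rw [ZMod.natCast_self, ← hv, h]; simp
  · exact hv

lemma rep_injective [NeZero m] : Function.Injective (rep m) := by
  intro a b h
  have := congrArg (fun x : ℕ => (x : ZMod m)) h
  simpa [natCast_rep] using this

lemma rep_natCast [NeZero m] {x : ℕ} (h1 : 1 ≤ x) (h2 : x ≤ m) : rep m (x : ZMod m) = x := by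
  rcases eq_or_lt_of_le h2 with rfl | h
  · unfold rep; simp [ZMod.natCast_self]
  · unfold rep; rw [ZMod.val_cast_of_lt h]
    have : x ≠ 0 := by omega
    simp [this]

lemma rep_le_iff [NeZero m] {r : ZMod m} {j : ℕ} (hj : j < m) :
    rep m r ≤ j ↔ 1 ≤ r.val ∧ r.val ≤ j := by
  unfold rep; split_ifs with h
  · omega
  · omega


section cycleSec
variable {m : ℕ} [NeZero m]




section cycle2
variable (d : ZMod m → ℕ)

/-- shifted count minus 1 -/
def g : ℕ → ℤ := fun t => (d ((t : ZMod m)) : ℤ) - 1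

/-- partial sums of `g (·+1)` -/
def G : ℕ → ℤ := fun t => ∑ v ∈ range t, g d (v + 1)

lemma g_period (t : ℕ) : g d (t + m) = g d t := by
  unfold g
  congr 2
  push_cast
  simp [ZMod.natCast_self]

lemma sum_g (hd : ∑ r : ZMod m, d r = m + 1) : ∑ v ∈ range m, g d v = 1 := by
  unfold g
  rw [Finset.sum_sub_distrib]
  have h1 : ∑ v ∈ range m, ((d ((v : ZMod m)) : ℤ)) = ((m : ℤ) + 1) := by
    have : ∑ v ∈ range m, (d ((v : ZMod m))) = ∑ r : ZMod m, d r := by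
      exact Finset.sum_nbij' (fun v => ((v : ZMod m))) (fun r => r.val)
        (fun v _ => mem_univ _)
        (fun r _ => mem_range.2 (ZMod.val_lt r))
        (fun v hv => ZMod.val_cast_of_lt (mem_range.1 hv))
        (fun r _ => by show ((r.val : ℕ) : ZMod m) = r; rw [ZMod.natCast_val, ZMod.cast_id])
        (fun v _ => rfl)
    calc ∑ v ∈ range m, ((d ((v : ZMod m)) : ℤ))
        = ((∑ v ∈ range m, d ((v : ZMod m)) : ℕ) : ℤ) := by push_cast; rfl
      _ = ((m : ℤ) + 1) := by rw [this, hd]; push_cast; ring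
  rw [h1]; simp

lemma sum_window (hd : ∑ r : ZMod m, d r = m + 1) (k : ℕ) :
    ∑ v ∈ Ico k (k + m), g d v = 1 := by
  induction k with
  | zero =>
    rw [show (0:ℕ) + m = m from by omega, ← Finset.range_eq_Ico]
    exact sum_g d hd
  | succ k ih =>
    have hm : 1 ≤ m := Nat.pos_of_ne_zero (NeZero.ne m)
    have h1 : ∑ v ∈ Ico k (k + m), g d v = g d k + ∑ v ∈ Ico (k+1) (k + m), g d v :=
      Finset.sum_eq_sum_Ico_succ_bot (by omega) _
    have h2 : ∑ v ∈ Ico (k+1) (k + 1 + m), g d v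
        = (∑ v ∈ Ico (k+1) (k + m), g d v) + g d (k + m) := by
      have : k + 1 + m = (k + m) + 1 := by omega
      rw [this, Finset.sum_Ico_succ_top (by omega)]
    rw [h2, g_period]
    linarith [h1, ih]

lemma G_add (hd : ∑ r : ZMod m, d r = m + 1) (t : ℕ) : G d (t + m) = G d t + 1 := by
  unfold G
  rw [Finset.range_eq_Ico, ← Finset.sum_Ico_consecutive _ (Nat.zero_le t) (by omega : t ≤ t + m),
    ← Finset.range_eq_Ico]
  congr 1
  have h1 : ∑ v ∈ Ico t (t + m), g d (v + 1) = ∑ v ∈ Ico (t+1) (t + 1 + m), g d v := by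
    rw [Finset.sum_Ico_eq_sum_range, Finset.sum_Ico_eq_sum_range]
    apply Finset.sum_congr
    · congr 1; omega
    · intro i _; congr 1; omega
  rw [h1, sum_window d hd]

/-- the "all partial sums positive from here" predicate -/
def Good (t : ℕ) : Prop := ∀ j : ℕ, 1 ≤ j → j ≤ m - 1 → G d t + 1 ≤ G d (t + j)

lemma exists_unique_good (hd : ∑ r : ZMod m, d r = m + 1) :
    ∃! t : ℕ, t < m ∧ Good d t := by
  have hm : 1 ≤ m := Nat.pos_of_ne_zero (NeZero.ne m)
  obtain ⟨t', ht'm, hmin'⟩ := Finset.exists_min_image (range m) (G d) ⟨0, mem_range.2 (by omega)⟩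
  set T := (range m).filter (fun t => ∀ u ∈ range m, G d t ≤ G d u) with hT
  have hTne : T.Nonempty := ⟨t', by simp only [hT, mem_filter]; exact ⟨ht'm, hmin'⟩⟩
  set t₀ := T.max' hTne with ht₀def
  have ht₀T : t₀ ∈ T := T.max'_mem hTne
  have ht₀m : t₀ < m := by
    have := (mem_filter.1 ht₀T).1; simpa using this
  have hmin : ∀ u ∈ range m, G d t₀ ≤ G d u := (mem_filter.1 ht₀T).2
  have hmax : ∀ u ∈ T, u ≤ t₀ := fun u hu => T.le_max' u hu
  refine ⟨t₀, ⟨ht₀m, ?_⟩, ?_⟩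
  · -- Good t₀
    intro j hj1 hj2
    by_cases hc : t₀ + j < m
    · have hu : t₀ + j ∈ range m := mem_range.2 hc
      have h1 : G d t₀ ≤ G d (t₀ + j) := hmin _ hu
      rcases eq_or_lt_of_le h1 with he | hlt
      · exfalso
        have : t₀ + j ∈ T := by
          simp only [hT, mem_filter]
          exact ⟨hu, fun u hu' => he ▸ hmin u hu'⟩
        have := hmax _ this
        omega
      · omega
    · push_neg at hc
      have hu : t₀ + j - m < m := by omega
      have heq : G d (t₀ + j) = G d (t₀ + j - m) + 1 := by
        conv_lhs => rw [show t₀ + j = (t₀ + j - m) + m from by omega]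
        rw [G_add d hd]
      have := hmin _ (mem_range.2 hu)
      omega
  · -- uniqueness
    rintro t₁ ⟨ht₁m, hg₁⟩
    by_contra hne
    rcases Nat.lt_or_ge t₁ t₀ with hlt | hge
    · have hj : 1 ≤ t₀ - t₁ ∧ t₀ - t₁ ≤ m - 1 := by omega
      have := hg₁ (t₀ - t₁) hj.1 hj.2
      have heq : t₁ + (t₀ - t₁) = t₀ := by omega
      rw [heq] at this
      have := hmin t₁ (mem_range.2 ht₁m)
      omega
    · have hlt : t₀ < t₁ := by omega
      have hj : 1 ≤ t₀ + m - t₁ ∧ t₀ + m - t₁ ≤ m - 1 := by omega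
      have h1 := hg₁ (t₀ + m - t₁) hj.1 hj.2
      have heq : t₁ + (t₀ + m - t₁) = t₀ + m := by omega
      rw [heq, G_add d hd] at h1
      have h2 := hmin t₁ (mem_range.2 ht₁m)
      have heq2 : G d t₁ = G d t₀ := by omega
      have : t₁ ∈ T := by
        simp only [hT, mem_filter]
        exact ⟨mem_range.2 ht₁m, fun u hu => heq2 ▸ hmin u hu⟩
      have := hmax _ this
      omega

end cycle2

def Cond (m : ℕ) (a : Fin (m+1) → ZMod m) : Prop :=
  ∀ j : ℕ, 1 ≤ j → j ≤ m → j + 1 ≤ (univ.filter (fun i => rep m (a i) ≤ j)).card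

def cnt (a : Fin (m+1) → ZMod m) : ZMod m → ℕ := fun r => (univ.filter (fun i => a i = r)).card

lemma sum_cnt (a : Fin (m+1) → ZMod m) : ∑ r : ZMod m, cnt a r = m + 1 := by
  have := Finset.card_eq_sum_card_fiberwise
    (s := (univ : Finset (Fin (m+1)))) (t := univ) (f := a) (fun x _ => mem_univ _)
  simpa [cnt] using this.symm

lemma count_eq (a : Fin (m+1) → ZMod m) (c : ZMod m) {j : ℕ} (hj1 : 1 ≤ j) (hjm : j < m) :
    (univ.filter (fun i => rep m (a i + c) ≤ j)).card = ∑ v ∈ Icc 1 j, cnt a ((v : ZMod m) - c) := by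
  have hset : univ.filter (fun i => rep m (a i + c) ≤ j)
      = univ.filter (fun i => (a i + c).val ∈ Icc 1 j) := by
    ext i
    simp only [mem_filter, mem_univ, true_and, mem_Icc]
    exact rep_le_iff hjm
  rw [hset, Finset.card_eq_sum_card_fiberwise (f := fun i => (a i + c).val) (t := Icc 1 j)
    (s := univ.filter (fun i => (a i + c).val ∈ Icc 1 j)) (fun x hx => Finset.mem_coe.2 (mem_filter.1 hx).2)]
  apply Finset.sum_congr rfl
  intro b hb
  have hb' := mem_Icc.1 hb
  have hfil : (univ.filter (fun i => (a i + c).val ∈ Icc 1 j)).filter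
      (fun i => (a i + c).val = b) = univ.filter (fun i => a i = (b : ZMod m) - c) := by
    ext i
    simp only [mem_filter, mem_univ, true_and, mem_Icc]
    constructor
    · rintro ⟨_, h2⟩
      have hv : a i + c = (b : ZMod m) := by
        rw [← h2, ZMod.natCast_val, ZMod.cast_id]
      rw [← hv]; ring
    · intro h
      have hv : a i + c = (b : ZMod m) := by rw [h]; ring
      have : (a i + c).val = b := by rw [hv, ZMod.val_cast_of_lt (by omega)]
      exact ⟨by omega, this⟩
  rw [hfil]
  rfl

lemma G_diff (d : ZMod m → ℕ) (t j : ℕ) :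
    G d (t + j) - G d t = ∑ i ∈ range j, g d (t + i + 1) := by
  have h : ∑ v ∈ Ico 0 t, g d (v+1) + ∑ v ∈ Ico t (t+j), g d (v+1)
      = ∑ v ∈ Ico 0 (t+j), g d (v+1) :=
    Finset.sum_Ico_consecutive _ (Nat.zero_le t) (Nat.le_add_right t j)
  have h2 : ∑ v ∈ Ico t (t+j), g d (v+1) = ∑ i ∈ range j, g d (t + i + 1) := by
    rw [Finset.sum_Ico_eq_sum_range]
    simp only [add_tsub_cancel_left]
  have hG1 : G d (t+j) = ∑ v ∈ Ico 0 (t+j), g d (v+1) := by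
    unfold G; rw [Finset.range_eq_Ico]
  have hG2 : G d t = ∑ v ∈ Ico 0 t, g d (v+1) := by
    unfold G; rw [Finset.range_eq_Ico]
  rw [hG1, hG2, ← h, h2]
  ring

lemma sum_cnt_eq (a : Fin (m+1) → ZMod m) (t j : ℕ) :
    ((∑ v ∈ Icc 1 j, cnt a ((v : ZMod m) + ((t : ℕ) : ZMod m))) : ℤ)
      = G (cnt a) (t + j) - G (cnt a) t + j := by
  rw [G_diff]
  have hIcc : Icc 1 j = Ico 1 (j+1) := by rw [Finset.Ico_add_one_right_eq_Icc]
  rw [hIcc, Finset.sum_Ico_eq_sum_range]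
  simp only [add_tsub_cancel_right]
  have hpt : ∀ i ∈ range j, ((cnt a ((1 + i : ℕ) + ((t:ℕ) : ZMod m))) : ℤ)
      = g (cnt a) (t + i + 1) + 1 := by
    intro i _
    unfold g
    have harg : ((1 + i : ℕ) : ZMod m) + ((t : ℕ) : ZMod m) = ((t + i + 1 : ℕ) : ZMod m) := by
      push_cast; ring
    push_cast at harg ⊢
    rw [harg]
    ring
  rw [Finset.sum_congr rfl hpt, Finset.sum_add_distrib]
  simp only [Finset.sum_const, Finset.card_range, nsmul_eq_mul, mul_one]


lemma cond_at_top (a : Fin (m+1) → ZMod m) :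
    (m:ℕ) + 1 ≤ (univ.filter (fun i => rep m (a i) ≤ m)).card := by
  have : (univ.filter (fun i => rep m (a i) ≤ m)) = univ := by
    apply Finset.eq_univ_of_forall
    intro i
    simp only [mem_filter, mem_univ, true_and]
    exact rep_le _
  rw [this]
  simp

lemma neg_val_cast (c : ZMod m) : (((-c).val : ℕ) : ZMod m) = -c := by
  rw [ZMod.natCast_val, ZMod.cast_id]

lemma cond_shift_iff (a : Fin (m+1) → ZMod m) (c : ZMod m) :
    Cond m (fun i => a i + c) ↔ Good (cnt a) ((-c).val) := by
  have hm : 1 ≤ m := Nat.pos_of_ne_zero (NeZero.ne m)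
  set t := (-c).val with htdef
  have key : ∀ j : ℕ, 1 ≤ j → j < m →
      (((univ.filter (fun i => rep m (a i + c) ≤ j)).card : ℤ))
        = G (cnt a) (t + j) - G (cnt a) t + j := by
    intro j hj1 hjm
    rw [count_eq a c hj1 hjm]
    have hvc : ∀ v ∈ Icc 1 j, cnt a ((v:ZMod m) - c) = cnt a ((v:ZMod m) + ((t:ℕ) : ZMod m)) := by
      intro v _
      congr 1
      rw [htdef, neg_val_cast]
      ring
    rw [Finset.sum_congr rfl hvc]
    rw [Nat.cast_sum]
    exact sum_cnt_eq a t j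
  constructor
  · intro h j hj1 hj2
    have hjm : j < m := by omega
    have h' := h j hj1 (by omega)
    have hcast : ((j:ℤ) + 1) ≤ (((univ.filter (fun i => rep m (a i + c) ≤ j)).card : ℤ)) := by
      exact_mod_cast h'
    rw [key j hj1 hjm] at hcast
    omega
  · intro h j hj1 hj2
    rcases eq_or_lt_of_le hj2 with rfl | hjm
    · exact cond_at_top _
    · have h' := h j hj1 (by omega)
      have : ((j:ℤ) + 1) ≤ (((univ.filter (fun i => rep m (a i + c) ≤ j)).card : ℤ)) := by
        rw [key j hj1 hjm]
        omega
      exact_mod_cast this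


lemma exists_unique_shift (a : Fin (m+1) → ZMod m) :
    ∃! c : ZMod m, Cond m (fun i => a i + c) := by
  obtain ⟨t₀, ⟨ht₀m, hg⟩, huniq⟩ := exists_unique_good (cnt a) (sum_cnt a)
  refine ⟨-((t₀ : ℕ) : ZMod m), ?_, ?_⟩
  · show Cond m (fun i => a i + (-((t₀ : ℕ) : ZMod m)))
    rw [cond_shift_iff]
    have hval : (-(-((t₀ : ℕ) : ZMod m))).val = t₀ := by
      rw [neg_neg, ZMod.val_cast_of_lt ht₀m]
    rw [hval]
    exact hg
  · intro c hc
    rw [cond_shift_iff] at hc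
    have hvt : (-c).val = t₀ := huniq _ ⟨ZMod.val_lt _, hc⟩
    have : -c = ((t₀ : ℕ) : ZMod m) := by rw [← hvt, ZMod.natCast_val, ZMod.cast_id]
    rw [← neg_neg c, this]

/-- strictly increasing prefix (via representatives) -/
def Incr (m s : ℕ) (a : Fin (m+1) → ZMod m) : Prop :=
  ∀ i j : Fin (m+1), (i:ℕ) < (j:ℕ) → (j:ℕ) < s → rep m (a i) < rep m (a j)

/-- distinct prefix -/
def PDist (m s : ℕ) (a : Fin (m+1) → ZMod m) : Prop :=
  ∀ i j : Fin (m+1), (i:ℕ) < (j:ℕ) → (j:ℕ) < s → a i ≠ a j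

variable {s : ℕ}

/-- split `Fin (m+1)` into the prefix of length `s` and the rest -/
def E (m : ℕ) {s : ℕ} (hs : s ≤ m) : (Fin s ⊕ Fin (m+1-s)) ≃ Fin (m+1) :=
  finSumFinEquiv.trans (finCongr (by omega))

lemma E_inl_val (hs : s ≤ m) (k : Fin s) : ((E m hs (Sum.inl k) : Fin (m+1)) : ℕ) = (k : ℕ) := by
  simp [E]

lemma E_symm_of_lt (hs : s ≤ m) {i : Fin (m+1)} (hi : (i:ℕ) < s) :
    (E m hs).symm i = Sum.inl ⟨(i:ℕ), hi⟩ := by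
  rw [Equiv.symm_apply_eq]
  exact Fin.ext (by rw [E_inl_val])

lemma pdist_iff (hs : s ≤ m) (a : Fin (m+1) → ZMod m) :
    PDist m s a ↔ Function.Injective (fun k : Fin s => a (E m hs (Sum.inl k))) := by
  constructor
  · intro h k k' hkk
    by_contra hne
    rcases Ne.lt_or_gt hne with hlt | hlt
    · exact h _ _ (by rw [E_inl_val, E_inl_val]; exact_mod_cast hlt)
        (by rw [E_inl_val]; exact k'.2) hkk
    · exact h _ _ (by rw [E_inl_val, E_inl_val]; exact_mod_cast hlt)
        (by rw [E_inl_val]; exact k.2) hkk.symm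
  · intro h i j hij hjs
    have his : (i:ℕ) < s := lt_trans hij hjs
    have hi : i = E m hs (Sum.inl ⟨(i:ℕ), his⟩) := Fin.ext (by rw [E_inl_val])
    have hj : j = E m hs (Sum.inl ⟨(j:ℕ), hjs⟩) := Fin.ext (by rw [E_inl_val])
    intro hne
    rw [hi, hj] at hne
    have := h hne
    simp only [Sum.inl.injEq, Fin.mk.injEq] at this
    omega

lemma incr_iff (hs : s ≤ m) (a : Fin (m+1) → ZMod m) :
    Incr m s a ↔ StrictMono (fun k : Fin s => rep m (a (E m hs (Sum.inl k)))) := by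
  constructor
  · intro h k k' hkk
    exact h _ _ (by rw [E_inl_val, E_inl_val]; exact_mod_cast hkk)
      (by rw [E_inl_val]; exact k'.2)
  · intro h i j hij hjs
    have his : (i:ℕ) < s := lt_trans hij hjs
    have hi : i = E m hs (Sum.inl ⟨(i:ℕ), his⟩) := Fin.ext (by rw [E_inl_val])
    have hj : j = E m hs (Sum.inl ⟨(j:ℕ), hjs⟩) := Fin.ext (by rw [E_inl_val])
    rw [hi, hj]
    exact h (by exact_mod_cast hij)

/-- splitting equivalence: functions with distinct prefix -/
def step3 (hs : s ≤ m) :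
    {a : Fin (m+1) → ZMod m // PDist m s a} ≃ ((Fin s ↪ ZMod m) × (Fin (m+1-s) → ZMod m)) where
  toFun a := (⟨fun k => a.1 (E m hs (Sum.inl k)), (pdist_iff hs a.1).1 a.2⟩,
    fun k => a.1 (E m hs (Sum.inr k)))
  invFun p := ⟨fun i => Sum.elim p.1 p.2 ((E m hs).symm i), by
    rw [pdist_iff hs]
    intro k k' h
    simp only [Equiv.symm_apply_apply, Sum.elim_inl] at h
    exact p.1.injective h⟩
  left_inv a := by
    apply Subtype.ext
    funext i
    simp only
    obtain ⟨x, hx⟩ := (E m hs).surjective i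
    rw [← hx, Equiv.symm_apply_apply]
    cases x <;> simp
  right_inv p := by
    apply Prod.ext
    · apply Function.Embedding.ext
      intro k
      simp
    · funext k
      simp

noncomputable def goodShift (a : Fin (m+1) → ZMod m) : ZMod m :=
  (exists_unique_shift a).exists.choose

lemma goodShift_spec (a : Fin (m+1) → ZMod m) :
    Cond m (fun i => a i + goodShift a) := (exists_unique_shift a).exists.choose_spec

lemma goodShift_unique {a : Fin (m+1) → ZMod m} {c : ZMod m}
    (hc : Cond m (fun i => a i + c)) : c = goodShift a :=
  (exists_unique_shift a).unique hc (goodShift_spec a)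

lemma goodShift_eq_zero {a : Fin (m+1) → ZMod m} (hc : Cond m a) : goodShift a = 0 := by
  have : Cond m (fun i => a i + 0) := by simpa using hc
  exact (goodShift_unique this).symm

lemma goodShift_shift (a : Fin (m+1) → ZMod m) (e : ZMod m) :
    goodShift (fun i => a i + e) = goodShift a - e := by
  symm
  apply goodShift_unique
  have : (fun i => (a i + e) + (goodShift a - e)) = fun i => a i + goodShift a := by
    funext i; ring
  rw [this]
  exact goodShift_spec a

lemma pdist_shift {a : Fin (m+1) → ZMod m} (hp : PDist m s a) (e : ZMod m) :
    PDist m s (fun i => a i + e) := by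
  intro i j hij hjs hne
  exact hp i j hij hjs (by simpa using hne)

/-- peel off the cyclic shift -/
noncomputable def step1 :
    {a : Fin (m+1) → ZMod m // PDist m s a} ≃
      ({a : Fin (m+1) → ZMod m // Cond m a ∧ PDist m s a} × ZMod m) where
  toFun a := (⟨fun i => a.1 i + goodShift a.1, goodShift_spec a.1, pdist_shift a.2 _⟩,
    - goodShift a.1)
  invFun p := ⟨fun i => p.1.1 i + p.2, pdist_shift p.1.2.2 _⟩
  left_inv a := by
    apply Subtype.ext
    funext i
    simp only
    ring
  right_inv p := by
    obtain ⟨⟨b, hbc, hbp⟩, c⟩ := p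
    have hgs : goodShift (fun i => b i + c) = - c := by
      rw [goodShift_shift, goodShift_eq_zero hbc, zero_sub]
    apply Prod.ext
    · apply Subtype.ext
      funext i
      simp only [hgs]
      ring
    · simp only [hgs, neg_neg]

-- permutation invariance of Cond
lemma card_filter_comp {n : ℕ} (σ : Equiv.Perm (Fin n)) (p : Fin n → Prop) [DecidablePred p] :
    (univ.filter (fun i => p (σ i))).card = (univ.filter p).card := by
  apply Finset.card_bij (fun i _ => σ i)
  · intro i hi; simp only [mem_filter, mem_univ, true_and] at hi ⊢; exact hi
  · intro i _ j _ h; exact σ.injective h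
  · intro b hb; refine ⟨σ.symm b, ?_, by simp⟩
    simp only [mem_filter, mem_univ, true_and] at hb ⊢; simpa using hb

lemma cond_comp (a : Fin (m+1) → ZMod m) (σ : Equiv.Perm (Fin (m+1))) (hc : Cond m a) :
    Cond m (fun i => a (σ i)) := by
  intro j hj1 hj2
  rw [card_filter_comp σ (fun i => rep m (a i) ≤ j)]
  exact hc j hj1 hj2

/-- extend a permutation of the prefix to all of `Fin (m+1)` -/
def extPerm (hs : s ≤ m) (τ : Equiv.Perm (Fin s)) : Equiv.Perm (Fin (m+1)) :=
  ((E m hs).symm.trans ((Equiv.sumCongr τ (Equiv.refl _)).trans (E m hs)))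

lemma extPerm_inl (hs : s ≤ m) (τ : Equiv.Perm (Fin s)) (k : Fin s) :
    extPerm hs τ (E m hs (Sum.inl k)) = E m hs (Sum.inl (τ k)) := by
  simp [extPerm]

lemma extPerm_cancel (hs : s ≤ m) (τ : Equiv.Perm (Fin s)) (x : Fin (m+1)) :
    extPerm hs τ⁻¹ (extPerm hs τ x) = x := by
  simp only [extPerm, Equiv.trans_apply, Equiv.symm_apply_apply, Equiv.sumCongr_apply,
    Equiv.coe_refl]
  have h1 : Sum.map (⇑τ⁻¹) id (Sum.map (⇑τ) id ((E m hs).symm x)) = (E m hs).symm x := by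
    cases h : (E m hs).symm x <;> simp
  rw [h1, Equiv.apply_symm_apply]

lemma extPerm_cancel' (hs : s ≤ m) (τ : Equiv.Perm (Fin s)) (x : Fin (m+1)) :
    extPerm hs τ (extPerm hs τ⁻¹ x) = x := by
  simp only [extPerm, Equiv.trans_apply, Equiv.symm_apply_apply, Equiv.sumCongr_apply,
    Equiv.coe_refl]
  have h1 : Sum.map (⇑τ) id (Sum.map (⇑τ⁻¹) id ((E m hs).symm x)) = (E m hs).symm x := by
    cases h : (E m hs).symm x <;> simp
  rw [h1, Equiv.apply_symm_apply]

lemma sort_unique {s : ℕ} {p : Fin s → ℕ} (hinj : Function.Injective p)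
    {τ : Equiv.Perm (Fin s)} (hmono : Monotone (p ∘ τ)) : τ = Tuple.sort p := by
  have h := Tuple.comp_sort_eq_comp_iff_monotone.mpr hmono
  apply Equiv.ext
  intro k
  exact hinj (congrFun h k)

/-- peel off the sorting permutation of the prefix -/
noncomputable def step2 (hs : s ≤ m) :
    {a : Fin (m+1) → ZMod m // Cond m a ∧ PDist m s a} ≃
      ({a : Fin (m+1) → ZMod m // Cond m a ∧ Incr m s a} × Equiv.Perm (Fin s)) where
  toFun b :=
    let τ := Tuple.sort (fun k => rep m (b.1 (E m hs (Sum.inl k))))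
    (⟨fun i => b.1 (extPerm hs τ i), by
      constructor
      · exact cond_comp b.1 _ b.2.1
      · rw [incr_iff hs]
        have hinj : Function.Injective (fun k => rep m (b.1 (E m hs (Sum.inl k)))) :=
          fun k k' h => (pdist_iff hs b.1).1 b.2.2 (rep_injective h)
        have hmono := Tuple.monotone_sort (fun k => rep m (b.1 (E m hs (Sum.inl k))))
        have hsm := hmono.strictMono_of_injective
          (hinj.comp (Tuple.sort (fun k => rep m (b.1 (E m hs (Sum.inl k))))).injective)
        have hfun : (fun k => rep m (b.1 (extPerm hs τ (E m hs (Sum.inl k)))))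
            = (fun k => rep m (b.1 (E m hs (Sum.inl k))))
              ∘ ⇑(Tuple.sort (fun k => rep m (b.1 (E m hs (Sum.inl k))))) := by
          funext k
          simp only [Function.comp_apply, extPerm_inl]
          rfl
        rw [hfun]
        exact hsm⟩, τ)
  invFun p := ⟨fun i => p.1.1 (extPerm hs p.2⁻¹ i), by
    constructor
    · exact cond_comp p.1.1 _ p.1.2.1
    · rw [pdist_iff hs]
      intro k k' h
      simp only [extPerm_inl] at h
      have hq : StrictMono (fun k => rep m (p.1.1 (E m hs (Sum.inl k)))) :=
        (incr_iff hs p.1.1).1 p.1.2.2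
      have h2 := hq.injective (congrArg (rep m) h)
      exact (Equiv.injective _ h2)⟩
  left_inv b := by
    apply Subtype.ext
    funext i
    simp only [extPerm_cancel']
  right_inv p := by
    obtain ⟨⟨a, hca, hia⟩, τ⟩ := p
    have hq : StrictMono (fun k => rep m (a (E m hs (Sum.inl k)))) := (incr_iff hs a).1 hia
    -- the prefix of the unsorted version
    have hpre : (fun k => rep m (a (extPerm hs τ⁻¹ (E m hs (Sum.inl k)))))
        = (fun k => rep m (a (E m hs (Sum.inl k)))) ∘ ⇑τ⁻¹ := by
      funext k
      simp only [Function.comp_apply, extPerm_inl]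
    have hinj : Function.Injective (fun k => rep m (a (extPerm hs τ⁻¹ (E m hs (Sum.inl k))))) := by
      rw [hpre]
      exact hq.injective.comp (Equiv.injective _)
    have hτ : τ = Tuple.sort (fun k => rep m (a (extPerm hs τ⁻¹ (E m hs (Sum.inl k))))) := by
      apply sort_unique hinj
      have : (fun k => rep m (a (extPerm hs τ⁻¹ (E m hs (Sum.inl k))))) ∘ ⇑τ
          = (fun k => rep m (a (E m hs (Sum.inl k)))) := by
        rw [hpre]
        funext k
        simp
      rw [this]
      exact hq.monotone
    apply Prod.ext
    · apply Subtype.ext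
      funext i
      simp only [← hτ, extPerm_cancel]
    · simp only [← hτ]

theorem card_core (hs : s ≤ m) :
    Nat.card {a : Fin (m+1) → ZMod m // Cond m a ∧ Incr m s a}
      = m.choose s * m ^ (m - s) := by
  have hm : 1 ≤ m := Nat.pos_of_ne_zero (NeZero.ne m)
  have h3 : Nat.card {a : Fin (m+1) → ZMod m // PDist m s a}
      = m.descFactorial s * m ^ (m + 1 - s) := by
    rw [Nat.card_congr (step3 hs), Nat.card_prod, Nat.card_eq_fintype_card,
      Nat.card_eq_fintype_card, Fintype.card_embedding_eq, ZMod.card, Fintype.card_fin,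
      Fintype.card_fun, ZMod.card, Fintype.card_fin]
  have h1 : Nat.card {a : Fin (m+1) → ZMod m // PDist m s a}
      = Nat.card {a : Fin (m+1) → ZMod m // Cond m a ∧ PDist m s a} * m := by
    rw [Nat.card_congr step1, Nat.card_prod, Nat.card_eq_fintype_card (α := ZMod m), ZMod.card]
  have h2 : Nat.card {a : Fin (m+1) → ZMod m // Cond m a ∧ PDist m s a}
      = Nat.card {a : Fin (m+1) → ZMod m // Cond m a ∧ Incr m s a} * s.factorial := by
    rw [Nat.card_congr (step2 hs), Nat.card_prod, Nat.card_eq_fintype_card (α := Equiv.Perm _),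
      Fintype.card_perm, Fintype.card_fin]
  rw [h1, h2] at h3
  have hrhs : m.descFactorial s * m ^ (m + 1 - s)
      = (m.choose s * m ^ (m - s)) * s.factorial * m := by
    rw [Nat.descFactorial_eq_factorial_mul_choose]
    have hpow : m ^ (m + 1 - s) = m ^ (m - s) * m := by
      rw [← pow_succ]
      congr 1
      omega
    rw [hpow]
    ring
  rw [hrhs] at h3
  have hfac : 0 < s.factorial := Nat.factorial_pos s
  have := Nat.eq_of_mul_eq_mul_right hm h3
  exact Nat.eq_of_mul_eq_mul_right hfac this

end cycleSec

lemma all_le_of_counts {n : ℕ} (hn : 2 ≤ n) {π : Fin n → ℕ}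
    (h2 : ∀ j : ℕ, 1 ≤ j → j ≤ n - 1 →
      j + 1 ≤ (univ.filter (fun i : Fin n => π i ≤ j)).card) :
    ∀ i, π i ≤ n - 1 := by
  have := h2 (n-1) (by omega) le_rfl
  have hle : (univ.filter (fun i : Fin n => π i ≤ n - 1)).card ≤ n := by
    simpa using Finset.card_filter_le univ (fun i : Fin n => π i ≤ n - 1)
  have hcard : (univ.filter (fun i : Fin n => π i ≤ n - 1)).card = n := by omega
  have huniv : (univ.filter (fun i : Fin n => π i ≤ n - 1)) = univ :=
    Finset.eq_univ_of_card _ (by simpa using hcard)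
  intro i
  have : i ∈ univ.filter (fun i : Fin n => π i ≤ n - 1) := by
    rw [huniv]; exact mem_univ i
  simpa using this

lemma prime_iff {n : ℕ} (hn : 2 ≤ n) (π : Fin n → ℕ) :
    IsPrimeParkingFunction n π ↔ (∀ i, 1 ≤ π i) ∧
      (∀ j : ℕ, 1 ≤ j → j ≤ n - 1 →
        j + 1 ≤ (univ.filter (fun i : Fin n => π i ≤ j)).card) := by
  constructor
  · rintro ⟨⟨h1, _⟩, h2⟩; exact ⟨h1, h2⟩
  · rintro ⟨h1, h2⟩
    refine ⟨⟨h1, ?_⟩, h2⟩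
    set σ := Tuple.sort π with hσ
    have hmono : Monotone (π ∘ σ) := Tuple.monotone_sort π
    refine ⟨σ, hmono, ?_⟩
    have hall : ∀ i, π i ≤ n - 1 := all_le_of_counts hn h2
    intro i
    by_cases hi : (i : ℕ) + 1 ≤ n - 1
    · by_contra hlt
      push_neg at hlt
      have hsub : (univ.filter (fun k : Fin n => π (σ k) ≤ (i:ℕ) + 1)) ⊆
          (univ.filter (fun k : Fin n => (k:ℕ) < (i:ℕ))) := by
        intro k hk
        simp only [mem_filter, mem_univ, true_and] at hk ⊢
        by_contra hk2
        push_neg at hk2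
        have : π (σ i) ≤ π (σ k) := hmono (by exact_mod_cast hk2 : i ≤ k)
        omega
      have hclt : (univ.filter (fun k : Fin n => (k:ℕ) < (i:ℕ))).card ≤ (i : ℕ) := by
        have h2 := Finset.card_le_card_of_injOn (f := fun k : Fin n => (k:ℕ))
          (s := univ.filter (fun k : Fin n => (k:ℕ) < (i:ℕ))) (t := Finset.range (i:ℕ))
          (fun k hk => by simp only [mem_coe, mem_filter, mem_univ, true_and] at hk
                          exact Finset.mem_range.2 hk)
          (fun a _ b _ h => Fin.ext h)
        exact le_trans h2 (le_of_eq (Finset.card_range _))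
      have h2' := h2 ((i:ℕ)+1) (by omega) hi
      have := (card_filter_comp σ (fun k => π k ≤ (i:ℕ)+1)).symm
      have hle := Finset.card_le_card hsub
      omega
    · calc π (σ i) ≤ n - 1 := hall _
        _ ≤ (i:ℕ) + 1 := by omega

end PPF

theorem card_primeParkingFunctions_firstIncreasing (n s : ℕ) (hs : s ≤ n - 1) :
    Set.ncard {π : Fin n → ℕ | IsPrimeParkingFunction n π ∧
        ∀ i j : Fin n, (i : ℕ) < (j : ℕ) → (j : ℕ) < s → π i < π j} =
      (n - 1).choose s * (n - 1) ^ (n - s - 1) := by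
  by_cases h0 : n = 0
  · subst h0
    have hs0 : s = 0 := by omega
    subst hs0
    have hset : {π : Fin 0 → ℕ | IsPrimeParkingFunction 0 π ∧
        ∀ i j : Fin 0, (i : ℕ) < (j : ℕ) → (j : ℕ) < 0 → π i < π j} = Set.univ := by
      apply Set.eq_univ_of_forall
      intro π
      refine ⟨⟨⟨fun i => i.elim0, 1, fun i _ _ => i.elim0, fun i => i.elim0⟩, ?_⟩,
        fun i => i.elim0⟩
      intro j hj1 hj2
      omega
    rw [hset, Set.ncard_univ]
    haveI : Unique (Fin 0 → ℕ) := ⟨⟨fun i => i.elim0⟩, fun f => funext fun i => i.elim0⟩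
    rw [Nat.card_unique]
    norm_num
  by_cases h1 : n = 1
  · subst h1
    have hs0 : s = 0 := by omega
    subst hs0
    have hset : {π : Fin 1 → ℕ | IsPrimeParkingFunction 1 π ∧
        ∀ i j : Fin 1, (i : ℕ) < (j : ℕ) → (j : ℕ) < 0 → π i < π j}
          = {fun _ => 1} := by
      ext π
      simp only [Set.mem_setOf_eq, Set.mem_singleton_iff]
      constructor
      · rintro ⟨⟨⟨hge, σ, _, hσ⟩, _⟩, _⟩
        funext i
        have h0 : σ i = i := Subsingleton.elim _ _
        have := hσ i
        rw [h0] at this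
        have hi0 : (i : ℕ) = 0 := by omega
        have := hge i
        omega
      · rintro rfl
        refine ⟨⟨⟨fun _ => le_refl 1, 1, monotone_const, fun i => ?_⟩, ?_⟩, ?_⟩
        · simp
        · intro j hj1 hj2; omega
        · intro i j _ hj; omega
    rw [hset, Set.ncard_singleton]
    norm_num
  · -- main case n ≥ 2
    have hn2 : 2 ≤ n := by omega
    obtain ⟨m, rfl⟩ : ∃ m, n = m + 1 := ⟨n - 1, by omega⟩
    have hm : 1 ≤ m := by omega
    haveI : NeZero m := ⟨by omega⟩
    have hsm : s ≤ m := by omega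
    have hmeq : m + 1 - 1 = m := by omega
    set F : (Fin (m+1) → ZMod m) → (Fin (m+1) → ℕ) := fun a i => PPF.rep m (a i) with hF
    have hinjF : Function.Injective F := by
      intro a b h
      funext i
      exact PPF.rep_injective (congrFun h i)
    have hset : {π : Fin (m+1) → ℕ | IsPrimeParkingFunction (m+1) π ∧
        ∀ i j : Fin (m+1), (i : ℕ) < (j : ℕ) → (j : ℕ) < s → π i < π j}
          = F '' {a | PPF.Cond m a ∧ PPF.Incr m s a} := by
      ext π
      simp only [Set.mem_setOf_eq, Set.mem_image]
      constructor
      · rintro ⟨hp, hincr⟩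
        rw [PPF.prime_iff hn2] at hp
        obtain ⟨hge, hcnt⟩ := hp
        rw [hmeq] at hcnt
        have hub : ∀ i, π i ≤ m := by
          have := PPF.all_le_of_counts hn2 (by rw [hmeq]; exact hcnt)
          rw [hmeq] at this
          exact this
        refine ⟨fun i => ((π i : ℕ) : ZMod m), ⟨?_, ?_⟩, ?_⟩
        · intro j hj1 hj2
          have hrw : (univ.filter (fun i => PPF.rep m (((π i : ℕ) : ZMod m)) ≤ j))
              = univ.filter (fun i => π i ≤ j) := by
            apply Finset.filter_congr
            intro i _
            rw [PPF.rep_natCast (hge i) (hub i)]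
          rw [hrw]
          exact hcnt j hj1 hj2
        · intro i j hij hjs
          rw [PPF.rep_natCast (hge i) (hub i), PPF.rep_natCast (hge j) (hub j)]
          exact hincr i j hij hjs
        · funext i
          exact PPF.rep_natCast (hge i) (hub i)
      · rintro ⟨a, ⟨hcond, hincr⟩, rfl⟩
        constructor
        · rw [PPF.prime_iff hn2]
          refine ⟨fun i => PPF.one_le_rep _, ?_⟩
          rw [hmeq]
          exact hcond
        · exact hincr
    rw [hset, Set.ncard_image_of_injective _ hinjF]
    have hcard : {a | PPF.Cond m a ∧ PPF.Incr m s a}.ncard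
        = Nat.card {a : Fin (m+1) → ZMod m // PPF.Cond m a ∧ PPF.Incr m s a} := by
      rw [← Nat.card_coe_set_eq]
      exact Nat.card_congr (Equiv.subtypeEquivRight (fun _ => Iff.rfl))
    have hexp : m + 1 - s - 1 = m - s := by omega
    rw [hcard, PPF.card_core hsm, Nat.add_sub_cancel, hexp]
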